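/- Let M > 0 and let ψ : ℝ → ℝ be twice continuously differentiable with ψ''(t) ≥ 0 and t·ψ''(t) ≤ M for all t > 0. Then for every a > 0 and every Δ ∈ ℝ with a + Δ ≥ 0, one has ψ(a+Δ) − ψ(a) − ψ'(a)·Δ ≤ M·Δ²/a. -/

import Mathlib

theorem stmt_3 (M : ℝ) (hM : 0 < M) (ψ : ℝ → ℝ) (hψ : ContDiff ℝ 2 ψ)
    (hconv : ∀ t : ℝ, 0 < t → 0 ≤ deriv (deriv ψ) t)
    (hbd : ∀ t : ℝ, 0 < t → t * deriv (deriv ψ) t ≤ M)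
    (a Δ : ℝ) (ha : 0 < a) (haΔ : 0 ≤ a + Δ) :
    ψ (a + Δ) - ψ a - deriv ψ a * Δ ≤ M * Δ ^ 2 / a := by
  set x := a + Δ with hx
  have hψ2 : ContDiff ℝ ((1 : ℕ) + 1) ψ := by exact_mod_cast hψ
  have hψ' : ContDiff ℝ (1 : ℕ) (deriv ψ) := (contDiff_succ_iff_deriv.mp hψ2).2.2
  have hdψ : Differentiable ℝ ψ := hψ.differentiable (by norm_num)
  have hdψ' : Differentiable ℝ (deriv ψ) := hψ'.differentiable (by norm_num)
  have hcψ'' : Continuous (deriv (deriv ψ)) := hψ'.continuous_deriv (by norm_num)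
  set g : ℝ → ℝ := fun t => ψ x - ψ t - deriv ψ t * (x - t) with hg
  have hgd : ∀ t : ℝ, HasDerivAt g (-(deriv (deriv ψ) t * (x - t))) t := by
    intro t
    have h1 : HasDerivAt ψ (deriv ψ t) t := (hdψ t).hasDerivAt
    have h2 : HasDerivAt (deriv ψ) (deriv (deriv ψ) t) t := (hdψ' t).hasDerivAt
    have h3 : HasDerivAt (fun s : ℝ => x - s) (-1) t := by
      simpa using (hasDerivAt_id t).const_sub x
    have h4 := h2.mul h3
    have h5 := ((hasDerivAt_const t (ψ x)).sub h1).sub h4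
    exact h5.congr_deriv (by ring)
  have hint : IntervalIntegrable (fun t => -(deriv (deriv ψ) t * (x - t)))
      MeasureTheory.volume a x := by
    apply Continuous.intervalIntegrable
    continuity
  have hftc := intervalIntegral.integral_eq_sub_of_hasDerivAt
      (fun t _ => hgd t) hint
  have hga : g x = 0 := by simp [hg]
  have hR : ψ x - ψ a - deriv ψ a * Δ
      = ∫ t in x..a, -(deriv (deriv ψ) t * (x - t)) := by
    rw [intervalIntegral.integral_symm, hftc, hga]
    simp [hg, hx]
  rw [hR]
  have hbound : ∀ t ∈ Set.uIoc x a,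
      ‖-(deriv (deriv ψ) t * (x - t))‖ ≤ M * |Δ| / a := by
    intro t ht
    rw [Set.mem_uIoc] at ht
    have htpos : 0 < t := by
      rcases ht with ⟨h1, h2⟩ | ⟨h1, h2⟩
      · exact lt_of_le_of_lt haΔ h1
      · exact lt_of_lt_of_le ha h1.le |>.trans_le le_rfl |> fun h => lt_of_lt_of_le ha h1.le
    have hψ''t : 0 ≤ deriv (deriv ψ) t := hconv t htpos
    have hψ''bd : t * deriv (deriv ψ) t ≤ M := hbd t htpos
    rw [norm_neg, Real.norm_eq_abs, abs_mul, abs_of_nonneg hψ''t]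
    have h1 : a * |x - t| ≤ t * |Δ| := by
      rcases ht with ⟨h1, h2⟩ | ⟨h1, h2⟩
      · -- x < t ≤ a, Δ = x - a ≤ 0
        have e1 : |x - t| = t - x := by rw [abs_sub_comm]; exact abs_of_nonneg (by linarith)
        have e2 : |Δ| = a - x := by
          rw [abs_of_nonpos (show Δ ≤ 0 by linarith), hx]; ring
        rw [e1, e2]
        nlinarith [mul_nonneg (sub_nonneg.mpr h2) haΔ]
      · -- a < t ≤ x, Δ = x - a ≥ 0
        have e1 : |x - t| = x - t := abs_of_nonneg (by linarith)
        have e2 : |Δ| = x - a := by rw [abs_of_nonneg (show (0:ℝ) ≤ Δ by linarith), hx]; ring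
        rw [e1, e2]
        nlinarith
    have key : deriv (deriv ψ) t * (a * |x - t|) ≤ M * |Δ| :=
      calc deriv (deriv ψ) t * (a * |x - t|) ≤ deriv (deriv ψ) t * (t * |Δ|) :=
            mul_le_mul_of_nonneg_left h1 hψ''t
        _ = (t * deriv (deriv ψ) t) * |Δ| := by ring
        _ ≤ M * |Δ| := mul_le_mul_of_nonneg_right hψ''bd (abs_nonneg _)
    rw [le_div_iff₀ ha]
    nlinarith [key]
  have hnorm := intervalIntegral.norm_integral_le_of_norm_le_const hbound
  have habs : |a - x| = |Δ| := by rw [show a - x = -Δ by rw [hx]; ring, abs_neg]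
  rw [habs] at hnorm
  calc (∫ t in x..a, -(deriv (deriv ψ) t * (x - t)))
      ≤ ‖∫ t in x..a, -(deriv (deriv ψ) t * (x - t))‖ := le_abs_self _
    _ ≤ M * |Δ| / a * |Δ| := hnorm
    _ = M * Δ ^ 2 / a := by rw [div_mul_eq_mul_div, mul_assoc, abs_mul_abs_self, ← sq]
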